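/- arXiv:2410.10297 — 2 statements merged into one kernel-verified Lean document; each statement's English description precedes it below -/
import Mathlib

section
/- Let V be a Hilbert space compactly embedded in a Hilbert space H, and let ω ↦ a_ω be a family of bounded sesquilinear forms on V, depending polynomially (specifically, quadratically) on ω ∈ ℂ, each satisfying a Gårding inequality with constants uniform on compact sets, and suppose there exists ω₀ ∈ ℂ for which a_{ω₀} is coercive (hence injective). Then the set {ω ∈ ℂ : ∃ u ∈ V, u ≠ 0, a_ω(u,v) = 0 ∀v ∈ V} is discrete in ℂ with no accumulation point. -/
open Filter Topology

section Aux

variable {V : Type*} [NormedAddCommGroup V] [InnerProductSpace ℂ V] [CompleteSpace V]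

local notation "⟪" x ", " y "⟫" => @inner ℂ _ _ x y

lemma aux_isUnit_of_coercive (B : V →L[ℂ] V) {c : ℝ} (hc : 0 < c)
    (hB : ∀ u : V, c * ‖u‖ ^ 2 ≤ (⟪u, B u⟫).re) : IsUnit B := by
  have hlow : ∀ u : V, c * ‖u‖ ≤ ‖B u‖ := by
    intro u
    rcases eq_or_ne u 0 with rfl | hu
    · simp
    have h1 : c * ‖u‖ ^ 2 ≤ ‖u‖ * ‖B u‖ := by
      refine (hB u).trans ?_
      refine le_trans (Complex.re_le_norm _) ?_
      simpa using norm_inner_le_norm (𝕜 := ℂ) u (B u)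
    have hun : 0 < ‖u‖ := norm_pos_iff.mpr hu
    nlinarith
  have hker : B.ker = ⊥ := by
    rw [LinearMap.ker_eq_bot']
    intro u hu
    have := hlow u
    rw [show B u = 0 from hu] at this
    simp at this
    have hn : ‖u‖ ≤ 0 := nonpos_of_mul_nonpos_right ?_ hc |>.trans le_rfl
    · exact norm_le_zero_iff.mp hn
    · simpa using this
  have hanti : AntilipschitzWith ⟨c⁻¹, le_of_lt (inv_pos.mpr hc)⟩ B := by
    apply B.antilipschitz_of_bound
    intro x
    have := hlow x
    change ‖x‖ ≤ c⁻¹ * ‖B x‖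
    rw [inv_mul_eq_div, le_div_iff₀ hc]
    calc ‖x‖ * c = c * ‖x‖ := mul_comm _ _
    _ ≤ ‖B x‖ := hlow x
  have hclosed : IsClosed (B.range : Set V) := by
    have : IsClosed (Set.range B) := hanti.isClosed_range B.uniformContinuous
    simpa [LinearMap.coe_range] using this
  haveI : CompleteSpace B.range := hclosed.completeSpace_coe
  have horth : B.rangeᗮ = ⊥ := by
    rw [Submodule.eq_bot_iff]
    intro v hv
    have h0 : ⟪B v, v⟫ = 0 := hv (B v) (LinearMap.mem_range_self _ v)
    have h2 : (⟪v, B v⟫).re = 0 := by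
      rw [← inner_conj_symm, h0]
      simp
    have := hB v
    rw [h2] at this
    by_contra hvne
    have hp : 0 < ‖v‖ := norm_pos_iff.mpr hvne
    nlinarith [mul_pos hc (mul_pos hp hp), pow_two ‖v‖]
  have hrange : B.range = ⊤ := Submodule.orthogonal_eq_bot_iff.mp horth
  let e := ContinuousLinearEquiv.ofBijective B hker hrange
  refine ⟨⟨B, (e.symm : V →L[ℂ] V), ?_, ?_⟩, rfl⟩
  · ext x
    rw [ContinuousLinearMap.mul_apply, ContinuousLinearMap.one_apply,
      ← ContinuousLinearEquiv.coeFn_ofBijective B hker hrange]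
    exact e.apply_symm_apply x
  · ext x
    rw [ContinuousLinearMap.mul_apply, ContinuousLinearMap.one_apply,
      ← ContinuousLinearEquiv.coeFn_ofBijective B hker hrange]
    exact e.symm_apply_apply x

lemma aux_finite_rank_approx (K : V →L[ℂ] V) (hK : IsCompactOperator (K : V → V))
    {ε : ℝ} (hε : 0 < ε) :
    ∃ (W : Submodule ℂ V) (T : V →L[ℂ] V), FiniteDimensional ℂ W ∧ (∀ u, T u ∈ W) ∧
      ∀ u, ‖K u - T u‖ ≤ ε * ‖u‖ := by
  obtain ⟨Kc, hKc, hmem⟩ := hK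
  obtain ⟨r, hr, hball⟩ := Metric.mem_nhds_iff.mp hmem
  obtain ⟨t, -, htfin, hcover⟩ :=
    finite_cover_balls_of_compact hKc (show (0:ℝ) < ε * r / 4 by positivity)
  set W : Submodule ℂ V := Submodule.span ℂ t with hW
  haveI : FiniteDimensional ℂ W := FiniteDimensional.span_of_finite ℂ htfin
  haveI : CompleteSpace W := FiniteDimensional.complete ℂ W
  set T : V →L[ℂ] V := W.subtypeL.comp ((Submodule.orthogonalProjectionOnto W).comp K) with hTdef
  refine ⟨W, T, inferInstance, fun u => (Submodule.orthogonalProjectionOnto W (K u)).2, ?_⟩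
  have hb : ∀ u : V, ‖u‖ < r → ‖K u - T u‖ ≤ ε * r / 4 := by
    intro u hu
    have hKu : K u ∈ Kc := hball (by simpa [Metric.mem_ball, dist_eq_norm] using hu)
    obtain ⟨y, hyt, hy⟩ := Set.mem_iUnion₂.mp (hcover hKu)
    have hyW : y ∈ W := Submodule.subset_span hyt
    have hTu : T u = W.starProjection (K u) := rfl
    rw [hTu, Submodule.starProjection_minimal]
    have hbdd : BddBelow (Set.range fun x : W => ‖K u - (x : V)‖) := by
      refine ⟨0, ?_⟩
      rintro _ ⟨x, rfl⟩
      positivity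
    refine le_trans (ciInf_le hbdd ⟨y, hyW⟩) ?_
    have : dist (K u) y < ε * r / 4 := Metric.mem_ball.mp hy
    rw [dist_eq_norm] at this
    exact le_of_lt this
  intro u
  rcases eq_or_ne u 0 with rfl | hu
  · simp
  have hun : 0 < ‖u‖ := norm_pos_iff.mpr hu
  set s : ℝ := r / (2 * ‖u‖) with hs
  have hspos : 0 < s := by positivity
  have hsval : s * ‖u‖ = r / 2 := by
    rw [hs]; field_simp
  have hsu : ‖(s:ℂ) • u‖ < r := by
    rw [norm_smul]
    simp only [Complex.norm_real, Real.norm_eq_abs, abs_of_pos hspos]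
    nlinarith [hsval]
  have h1 := hb ((s:ℂ) • u) hsu
  have h2 : K ((s:ℂ) • u) - T ((s:ℂ) • u) = (s:ℂ) • (K u - T u) := by
    rw [map_smul, map_smul, smul_sub]
  rw [h2, norm_smul] at h1
  simp only [Complex.norm_real, Real.norm_eq_abs, abs_of_pos hspos] at h1
  have h4 : s * ‖K u - T u‖ ≤ s * (ε * ‖u‖) := by
    have he : s * (ε * ‖u‖) = ε * (s * ‖u‖) := by ring
    rw [he, hsval]
    nlinarith [mul_pos hε hr]
  exact le_of_mul_le_mul_left h4 hspos

lemma aux_exists_op (b : V → V → ℂ)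
    (h1 : ∀ (c : ℂ) (x y v : V), b (c • x + y) v = c * b x v + b y v)
    (h2 : ∀ (c : ℂ) (v x y : V), b v (c • x + y) = (starRingEnd ℂ) c * b v x + b v y)
    (h3 : ∃ M : ℝ, ∀ u v, ‖b u v‖ ≤ M * ‖u‖ * ‖v‖) :
    ∃ Op : V →L[ℂ] V, ∀ u v, b u v = ⟪v, Op u⟫ := by
  obtain ⟨M, hM⟩ := h3
  have hz1 : ∀ v, b 0 v = 0 := by
    intro v
    have h := h1 1 0 0 v
    simp only [one_smul, add_zero, one_mul] at h
    exact add_eq_left.mp h.symm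
  have hz2 : ∀ v, b v 0 = 0 := by
    intro v
    have h := h2 1 v 0 0
    simp only [one_smul, add_zero, map_one, one_mul] at h
    exact add_eq_left.mp h.symm
  have hadd1 : ∀ x y v, b (x + y) v = b x v + b y v := by
    intro x y v
    have h := h1 1 x y v
    simpa only [one_smul, one_mul] using h
  have hsmul1 : ∀ (c : ℂ) x v, b (c • x) v = c * b x v := by
    intro c x v
    have h := h1 c x 0 v
    simpa only [add_zero, hz1] using h
  have hadd2 : ∀ v x y, b v (x + y) = b v x + b v y := by
    intro v x y
    have h := h2 1 v x y
    simpa only [one_smul, map_one, one_mul] using h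
  have hsmul2 : ∀ (c : ℂ) v x, b v (c • x) = (starRingEnd ℂ) c * b v x := by
    intro c v x
    have h := h2 c v x 0
    simpa only [add_zero, hz2] using h
  let ℓ : V →ₗ⋆[ℂ] V →ₗ[ℂ] ℂ :=
    { toFun := fun u =>
        { toFun := fun v => (starRingEnd ℂ) (b u v)
          map_add' := fun x y => by
            show (starRingEnd ℂ) (b u (x + y)) = _
            rw [hadd2]; simp
          map_smul' := fun c x => by
            show (starRingEnd ℂ) (b u (c • x)) = _
            rw [hsmul2]
            simp [mul_comm] }
      map_add' := fun x y => by
        ext v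
        simp only [LinearMap.coe_mk, AddHom.coe_mk, LinearMap.add_apply]
        rw [hadd1]
        simp
      map_smul' := fun c x => by
        ext v
        simp only [LinearMap.coe_mk, AddHom.coe_mk, LinearMap.smul_apply]
        rw [hsmul1]
        simp [smul_eq_mul] }
  let B : V →L⋆[ℂ] V →L[ℂ] ℂ := LinearMap.mkContinuous₂ ℓ M (fun u v => by
    show ‖(starRingEnd ℂ) (b u v)‖ ≤ M * ‖u‖ * ‖v‖
    rw [RCLike.norm_conj]
    exact hM u v)
  refine ⟨InnerProductSpace.continuousLinearMapOfBilin B, fun u v => ?_⟩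
  have h := InnerProductSpace.continuousLinearMapOfBilin_apply B u v
  have hBuv : B u v = (starRingEnd ℂ) (b u v) := rfl
  rw [hBuv] at h
  rw [← inner_conj_symm]
  rw [h]
  simp

lemma aux_det (P : ℂ → V →L[ℂ] V) (T : V →L[ℂ] V) (W : Submodule ℂ V)
    [FiniteDimensional ℂ W] (hT : ∀ u, T u ∈ W) :
    ∃ d : ℂ → ℂ,
      (∀ ω : ℂ, AnalyticAt ℂ P ω → IsUnit (P ω) → AnalyticAt ℂ d ω) ∧
      (∀ ω : ℂ, IsUnit (P ω) →
        (d ω = 0 ↔ ∃ u : V, u ≠ 0 ∧ (P ω - T) u = 0)) := by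
  classical
  haveI : CompleteSpace W := FiniteDimensional.complete ℂ W
  set n := Module.finrank ℂ W with hn
  let bW : Module.Basis (Fin n) ℂ W := Module.finBasis ℂ W
  let φ : Fin n → V →L[ℂ] ℂ := fun i =>
    (LinearMap.toContinuousLinearMap (bW.coord i)).comp (Submodule.orthogonalProjectionOnto W)
  let m : ℂ → Matrix (Fin n) (Fin n) ℂ := fun ω =>
    Matrix.of fun i j =>
      (if i = j then (1:ℂ) else 0) - φ i (T (Ring.inverse (P ω) ((bW j : V))))
  refine ⟨fun ω => (m ω).det, ?_, ?_⟩
  · intro ω hPa hPu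
    have hinv : AnalyticAt ℂ (fun w => Ring.inverse (P w)) ω := by
      have h := analyticAt_inverse (𝕜 := ℂ) hPu.unit
      rw [hPu.unit_spec] at h
      exact h.comp hPa
    have hentry : ∀ i j : Fin n,
        AnalyticAt ℂ (fun w => φ i (T (Ring.inverse (P w) ((bW j : V))))) ω := by
      intro i j
      have hcomp : (fun w => φ i (T (Ring.inverse (P w) ((bW j : V))))) =
          (fun A : V →L[ℂ] V => ((φ i).comp (T.comp
            ((ContinuousLinearMap.apply ℂ V) ((bW j : V))))) A) ∘
          (fun w => Ring.inverse (P w)) := rfl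
      rw [hcomp]
      exact (ContinuousLinearMap.analyticAt _ _).comp hinv
    have hdet : (fun ω => (m ω).det) = fun ω =>
        ∑ σ : Equiv.Perm (Fin n), (Equiv.Perm.sign σ : ℂ) *
          ∏ i, m ω (σ i) i := by
      funext w
      rw [Matrix.det_apply']
    rw [hdet]
    refine Finset.analyticAt_fun_sum _ (fun σ _ => analyticAt_const.mul ?_)
    refine Finset.analyticAt_fun_prod _ (fun i _ => ?_)
    exact analyticAt_const.sub (hentry (σ i) i)
  · intro ω hPu
    set Q : V →L[ℂ] V := Ring.inverse (P ω) with hQ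
    have hQP : ∀ u, Q (P ω u) = u := by
      intro u
      have h := Ring.inverse_mul_cancel (P ω) hPu
      calc Q (P ω u) = (Q * P ω) u := (ContinuousLinearMap.mul_apply _ _ _).symm
      _ = u := by rw [h]; rfl
    have hPQ : ∀ u, P ω (Q u) = u := by
      intro u
      have h := Ring.mul_inverse_cancel (P ω) hPu
      calc P ω (Q u) = (P ω * Q) u := (ContinuousLinearMap.mul_apply _ _ _).symm
      _ = u := by rw [h]; rfl
    let Mlin : W →ₗ[ℂ] W :=
      LinearMap.codRestrict W (((T.comp Q).toLinearMap).comp W.subtype)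
        (fun w => hT _)
    have hproj : ∀ x : V, (hx : x ∈ W) →
        Submodule.orthogonalProjectionOnto W x = (⟨x, hx⟩ : W) := by
      intro x hx
      exact Submodule.orthogonalProjectionOnto_mem_subspace_eq_self (⟨x, hx⟩ : W)
    have hdet : (m ω).det = LinearMap.det (LinearMap.id (R := ℂ) (M := W) - Mlin) := by
      rw [← LinearMap.det_toMatrix bW]
      congr 1
      ext i j
      rw [LinearMap.toMatrix_apply]
      have h1 : (LinearMap.id (R := ℂ) (M := W) - Mlin) (bW j) = bW j - Mlin (bW j) := rfl
      rw [h1, map_sub, Finsupp.sub_apply]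
      have h2 : (bW.repr (bW j)) i = if i = j then (1:ℂ) else 0 := by
        rw [Module.Basis.repr_self_apply]
        by_cases h : i = j <;> simp [h, eq_comm]
      have h3 : (bW.repr (Mlin (bW j))) i = φ i (T (Q ((bW j : V)))) := by
        have hMl : Mlin (bW j) = ⟨T (Q ((bW j : V))), hT _⟩ := rfl
        have hφ : φ i (T (Q ((bW j : V)))) =
            bW.coord i (Submodule.orthogonalProjectionOnto W (T (Q ((bW j : V))))) := rfl
        rw [hφ, hproj _ (hT _), hMl]
        rfl
      rw [h2, h3]
      rfl
    constructor
    · intro hd0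
      replace hd0 : (m ω).det = 0 := hd0
      rw [hdet] at hd0
      obtain ⟨w, hwne, hweq⟩ :=
        ((LinearMap.hasEigenvalue_zero_tfae (LinearMap.id (R := ℂ) (M := W) - Mlin)).out 3 5).mp hd0
      have hfix : Mlin w = w := by
        have : w - Mlin w = 0 := hweq
        rwa [sub_eq_zero, eq_comm] at this
      have hfixV : T (Q (w : V)) = (w : V) := congrArg Subtype.val hfix
      refine ⟨Q (w : V), ?_, ?_⟩
      · intro h0
        apply hwne
        have : (w : V) = 0 := by rw [← hfixV, h0, map_zero]
        exact Subtype.coe_injective this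
      · rw [ContinuousLinearMap.sub_apply, hPQ, hfixV, sub_self]
    · rintro ⟨u, hu, hker⟩
      have hPT : P ω u = T u := by
        rw [ContinuousLinearMap.sub_apply] at hker
        exact sub_eq_zero.mp hker
      have hwne : (⟨T u, hT u⟩ : W) ≠ 0 := by
        intro h0
        have hTu0 : T u = 0 := congrArg Subtype.val h0
        apply hu
        rw [← hQP u, hPT, hTu0, map_zero]
      have hQTu : Q (T u) = u := by rw [← hPT, hQP]
      have hfix : Mlin ⟨T u, hT u⟩ = ⟨T u, hT u⟩ := by
        apply Subtype.ext
        show T (Q (T u)) = T u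
        rw [hQTu]
      show (m ω).det = 0
      rw [hdet]
      have hker0 : (LinearMap.id (R := ℂ) (M := W) - Mlin) ⟨T u, hT u⟩ = 0 := by
        show (⟨T u, hT u⟩ : W) - Mlin ⟨T u, hT u⟩ = 0
        rw [hfix, sub_self]
      have hiff := (LinearMap.hasEigenvalue_zero_tfae
        (LinearMap.id (R := ℂ) (M := W) - Mlin)).out 3 5
      exact hiff.mpr ⟨⟨T u, hT u⟩, hwne, hker0⟩

end Aux

local notation "⟪" x ", " y "⟫" => @inner ℂ _ _ x y

/-- Discreteness of resonant quasi-frequencies (Theorem `discrete`): for a family of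
bounded sesquilinear forms depending quadratically on `ω`, satisfying Gårding
inequalities with constants uniform on compact sets relative to a compact embedding,
and coercive at some `ω₀`, the set of `ω` admitting a nontrivial kernel element has
no accumulation point in `ℂ`. -/
theorem stmt_8 {V H : Type*}
    [NormedAddCommGroup V] [InnerProductSpace ℂ V] [CompleteSpace V]
    [NormedAddCommGroup H] [InnerProductSpace ℂ H] [CompleteSpace H]
    (ι : V →L[ℂ] H) (hcomp : IsCompactOperator ι) (hinj : Function.Injective ι)
    (a : ℂ → V → V → ℂ) (a0 a1 a2 : V → V → ℂ)
    (hquad : ∀ (ω : ℂ) (u v : V), a ω u v = a0 u v + ω * a1 u v + ω ^ 2 * a2 u v)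
    (hlin : ∀ b ∈ ({a0, a1, a2} : Set (V → V → ℂ)),
      (∀ (c : ℂ) (x y v : V), b (c • x + y) v = c * b x v + b y v) ∧
      (∀ (c : ℂ) (v x y : V), b v (c • x + y) = (starRingEnd ℂ) c * b v x + b v y) ∧
      (∃ M : ℝ, ∀ u v, ‖b u v‖ ≤ M * ‖u‖ * ‖v‖))
    (hG : ∀ Kset : Set ℂ, IsCompact Kset →
      ∃ c > (0:ℝ), ∃ C : ℝ, ∀ ω ∈ Kset, ∀ u : V,
        c * ‖u‖ ^ 2 - C * ‖ι u‖ ^ 2 ≤ (a ω u u).re)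
    (hcoerc : ∃ ω₀ : ℂ, ∃ c0 > (0:ℝ), ∀ u : V, c0 * ‖u‖ ^ 2 ≤ (a ω₀ u u).re) :
    ∀ z : ℂ, ¬ AccPt z (Filter.principal {ω : ℂ | ∃ u : V, u ≠ 0 ∧ ∀ v : V, a ω u v = 0}) := by
  classical
  set S : Set ℂ := {ω : ℂ | ∃ u : V, u ≠ 0 ∧ ∀ v : V, a ω u v = 0} with hSdef
  -- operator representation
  obtain ⟨Op0, hOp0⟩ := aux_exists_op a0 (hlin a0 (by simp)).1 (hlin a0 (by simp)).2.1
    (hlin a0 (by simp)).2.2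
  obtain ⟨Op1, hOp1⟩ := aux_exists_op a1 (hlin a1 (by simp)).1 (hlin a1 (by simp)).2.1
    (hlin a1 (by simp)).2.2
  obtain ⟨Op2, hOp2⟩ := aux_exists_op a2 (hlin a2 (by simp)).1 (hlin a2 (by simp)).2.1
    (hlin a2 (by simp)).2.2
  set Aop : ℂ → V →L[ℂ] V := fun ω => Op0 + ω • Op1 + ω ^ 2 • Op2 with hAop
  have hArep : ∀ (ω : ℂ) (u v : V), a ω u v = ⟪v, Aop ω u⟫ := by
    intro ω u v
    rw [hquad, hOp0 u v, hOp1 u v, hOp2 u v]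
    simp only [hAop, ContinuousLinearMap.add_apply, ContinuousLinearMap.smul_apply,
      inner_add_right, inner_smul_right]
  have hSmem : ∀ ω : ℂ, ω ∈ S ↔ ∃ u : V, u ≠ 0 ∧ Aop ω u = 0 := by
    intro ω
    constructor
    · rintro ⟨u, hu, hav⟩
      refine ⟨u, hu, ?_⟩
      have h0 : ⟪Aop ω u, Aop ω u⟫ = 0 := by
        rw [← hArep ω u (Aop ω u)]
        exact hav _
      exact inner_self_eq_zero.mp h0
    · rintro ⟨u, hu, hA0⟩
      exact ⟨u, hu, fun v => by rw [hArep ω u v, hA0, inner_zero_right]⟩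
  set Kop : V →L[ℂ] V := (ContinuousLinearMap.adjoint ι).comp ι with hKop
  have hKip : ∀ u : V, (⟪u, Kop u⟫).re = ‖ι u‖ ^ 2 := by
    intro u
    have h1 : ⟪u, Kop u⟫ = ⟪ι u, ι u⟫ := by
      rw [hKop]
      exact ContinuousLinearMap.adjoint_inner_right ι u (ι u)
    rw [h1]
    exact inner_self_eq_norm_sq (𝕜 := ℂ) (ι u)
  have hKcomp : IsCompactOperator (Kop : V → V) := by
    have h := hcomp.continuous_comp (ContinuousLinearMap.adjoint ι).continuous
    exact h
  -- local key lemma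
  have key : ∀ z : ℂ, AccPt z (𝓟 S) → ∀ᶠ w in 𝓝 z, w ∈ S := by
    intro z hacc
    obtain ⟨c, hc, C', hGz⟩ := hG (Metric.closedBall z 1) (isCompact_closedBall z 1)
    set C : ℝ := max C' 1 with hC
    have hCpos : (0:ℝ) < C := lt_of_lt_of_le one_pos (le_max_right C' 1)
    have hGz' : ∀ ω ∈ Metric.closedBall z 1, ∀ u : V,
        c * ‖u‖ ^ 2 ≤ (a ω u u).re + C * ‖ι u‖ ^ 2 := by
      intro ω hω u
      have h1 := hGz ω hω u
      have h2 : C' * ‖ι u‖ ^ 2 ≤ C * ‖ι u‖ ^ 2 :=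
        mul_le_mul_of_nonneg_right (le_max_left C' 1) (by positivity)
      linarith
    have hCK : IsCompactOperator (((C:ℂ) • Kop : V →L[ℂ] V) : V → V) := by
      have h := hKcomp.smul (C:ℂ)
      have he : (((C:ℂ) • Kop : V →L[ℂ] V) : V → V) = (C:ℂ) • (Kop : V → V) := by
        funext u; simp
      rw [he]
      exact h
    obtain ⟨W, T, hWfin, hTW, hTb⟩ := aux_finite_rank_approx ((C:ℂ) • Kop) hCK (half_pos hc)
    haveI := hWfin
    set Bt : ℂ → V →L[ℂ] V := fun ω => Aop ω + T with hBt
    have hBtcoerc : ∀ ω ∈ Metric.closedBall z 1, ∀ u : V,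
        c / 2 * ‖u‖ ^ 2 ≤ (⟪u, Bt ω u⟫).re := by
      intro ω hω u
      have hvec : Bt ω u = Aop ω u + ((C:ℂ) • Kop) u - (((C:ℂ) • Kop) u - T u) := by
        simp [hBt]
        abel
      have hre : (⟪u, Bt ω u⟫).re =
          (⟪u, Aop ω u⟫).re + (⟪u, ((C:ℂ) • Kop) u⟫).re
            - (⟪u, ((C:ℂ) • Kop) u - T u⟫).re := by
        rw [hvec, inner_sub_right, inner_add_right]
        simp [Complex.sub_re, Complex.add_re, inner_sub_right, inner_smul_right_eq_smul]
      have hre1 : (⟪u, Aop ω u⟫).re = (a ω u u).re := by rw [← hArep]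
      have hre2 : (⟪u, ((C:ℂ) • Kop) u⟫).re = C * ‖ι u‖ ^ 2 := by
        have : ((C:ℂ) • Kop) u = (C:ℂ) • Kop u := by simp
        rw [this, inner_smul_right]
        rw [Complex.re_ofReal_mul, hKip]
      have hre3 : (⟪u, ((C:ℂ) • Kop) u - T u⟫).re ≤ c / 2 * ‖u‖ ^ 2 := by
        have h1 : (⟪u, ((C:ℂ) • Kop) u - T u⟫).re ≤ ‖u‖ * ‖((C:ℂ) • Kop) u - T u‖ := by
          refine le_trans (Complex.re_le_norm _) ?_
          exact
            norm_inner_le_norm (𝕜 := ℂ) u (((C:ℂ) • Kop) u - T u)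
        have h2 := hTb u
        have h3 : ‖u‖ * ‖((C:ℂ) • Kop) u - T u‖ ≤ ‖u‖ * (c / 2 * ‖u‖) :=
          mul_le_mul_of_nonneg_left h2 (norm_nonneg u)
        have h4 : ‖u‖ * (c / 2 * ‖u‖) = c / 2 * ‖u‖ ^ 2 := by ring
        linarith
      have hg := hGz' ω hω u
      rw [hre, hre1, hre2]
      linarith
    have hBtunit : ∀ ω ∈ Metric.closedBall z 1, IsUnit (Bt ω) := fun ω hω =>
      aux_isUnit_of_coercive _ (half_pos hc) (hBtcoerc ω hω)
    have hBtan : ∀ ω : ℂ, AnalyticAt ℂ Bt ω := by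
      intro ω
      have h1 : AnalyticAt ℂ (fun w : ℂ => w • Op1) ω := analyticAt_id.smul analyticAt_const
      have h2 : AnalyticAt ℂ (fun w : ℂ => w ^ 2 • Op2) ω :=
        (analyticAt_id.pow 2).smul analyticAt_const
      exact ((analyticAt_const.add h1).add h2).add analyticAt_const
    obtain ⟨d, hdan, hdiff⟩ := aux_det Bt T W hTW
    have hz1 : z ∈ Metric.closedBall z 1 := Metric.mem_closedBall_self (by norm_num)
    have hdz : AnalyticAt ℂ d z := hdan z (hBtan z) (hBtunit z hz1)
    have hSd : ∀ ω ∈ Metric.closedBall z 1, (ω ∈ S ↔ d ω = 0) := by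
      intro ω hω
      rw [hSmem ω, hdiff ω (hBtunit ω hω)]
      have hBT : Bt ω - T = Aop ω := add_sub_cancel_right _ _
      rw [hBT]
    rcases hdz.eventually_eq_zero_or_eventually_ne_zero with hcase | hcase
    · have hball : ∀ᶠ w in 𝓝 z, w ∈ Metric.closedBall z 1 := by
        filter_upwards [Metric.closedBall_mem_nhds z one_pos] with w hw
        exact hw
      filter_upwards [hcase, hball] with w hw1 hw2
      exact (hSd w hw2).mpr hw1
    · exfalso
      have h1 : ∃ᶠ y in 𝓝 z, y ≠ z ∧ y ∈ S := (accPt_iff_frequently (x := z) (C := S)).mp hacc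
      have h2 : ∀ᶠ w in 𝓝 z, w ∈ Metric.closedBall z 1 := by
        filter_upwards [Metric.closedBall_mem_nhds z one_pos] with w hw
        exact hw
      have h3 : ∀ᶠ w in 𝓝 z, w ≠ z → d w ≠ 0 := by
        rw [eventually_nhdsWithin_iff] at hcase
        filter_upwards [hcase] with w hw hwz
        exact hw hwz
      obtain ⟨y, ⟨hyne, hyS⟩, hyball, hyimp⟩ := (h1.and_eventually (h2.and h3)).exists
      exact hyimp hyne ((hSd y hyball).mp hyS)
  -- global clopen argument
  have hUopen : IsOpen {z : ℂ | ∀ᶠ w in 𝓝 z, w ∈ S} := isOpen_setOf_eventually_nhds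
  have hUclosed : IsClosed {z : ℂ | ∀ᶠ w in 𝓝 z, w ∈ S} := by
    refine isClosed_of_closure_subset ?_
    intro z hz
    refine key z ?_
    rw [accPt_iff_frequently]
    refine Filter.frequently_iff.mpr ?_
    intro t ht
    obtain ⟨ε, hε, htball⟩ := Metric.mem_nhds_iff.mp ht
    obtain ⟨u, huU, hud⟩ := Metric.mem_closure_iff.mp hz (ε/2) (by positivity)
    have huS : ∀ᶠ w in 𝓝 u, w ∈ S := huU
    have hmem : (S ∩ Metric.ball u (ε/2)) ∈ 𝓝 u :=
      Filter.inter_mem huS (Metric.ball_mem_nhds u (by positivity))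
    have hmem' : (S ∩ Metric.ball u (ε/2)) ∩ {z}ᶜ ∈ 𝓝[≠] u := by
      rcases eq_or_ne u z with rfl | hne
      · exact Filter.inter_mem (mem_nhdsWithin_of_mem_nhds hmem) self_mem_nhdsWithin
      · refine mem_nhdsWithin_of_mem_nhds (Filter.inter_mem hmem ?_)
        exact isOpen_compl_singleton.mem_nhds (by simpa using hne)
    obtain ⟨w, ⟨hwS, hwb⟩, hwz⟩ := Filter.nonempty_of_mem hmem'
    refine ⟨w, htball ?_, ?_, hwS⟩
    · rw [Metric.mem_ball]
      have d1 : dist w u < ε/2 := Metric.mem_ball.mp hwb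
      have d2 : dist u z < ε/2 := by rw [dist_comm]; exact hud
      calc dist w z ≤ dist w u + dist u z := dist_triangle _ _ _
      _ < ε := by linarith
    · simpa using hwz
  intro z hacc
  have hzU : z ∈ {z : ℂ | ∀ᶠ w in 𝓝 z, w ∈ S} := key z hacc
  have hclopen : IsClopen {z : ℂ | ∀ᶠ w in 𝓝 z, w ∈ S} := ⟨hUclosed, hUopen⟩
  rcases isClopen_iff.mp hclopen with hempty | huniv
  · rw [hempty] at hzU
    exact hzU
  · obtain ⟨ω₀, c0, hc0, hco⟩ := hcoerc
    have hω₀U : ω₀ ∈ {z : ℂ | ∀ᶠ w in 𝓝 z, w ∈ S} := by rw [huniv]; trivial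
    have hω₀S : ω₀ ∈ S := hω₀U.self_of_nhds
    obtain ⟨u, hu, hav⟩ := hω₀S
    have h1 := hco u
    have h2 : (a ω₀ u u).re = 0 := by rw [hav u]; rfl
    rw [h2] at h1
    have hun : 0 < ‖u‖ := norm_pos_iff.mpr hu
    nlinarith [mul_pos hc0 (mul_pos hun hun), pow_two ‖u‖]
end

section
/- Let C_inv > 0, and suppose nonnegative reals a_n for −K ≤ n ≤ K satisfy Σ_{n=−K}^{K} (n⁴ − C·C_inv²·n²)·a_n² ≤ C·C_inv⁴ for a constant C > 0, together with Σ_n a_n² ≤ 1. Then there is a constant C' depending only on C such that for all 1 < |n| ≤ K one has a_n ≤ C'·C_inv²/n². -/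
open Finset

/-- Combinatorial core of the localization theorem (Theorem `localization`):
the derived weighted inequality forces quadratic decay of the coefficients. -/
theorem stmt_10 :
    ∀ C : ℝ, 0 < C → ∃ C' : ℝ, 0 < C' ∧
      ∀ (K : ℕ) (Cinv : ℝ), 0 < Cinv →
        ∀ a : ℤ → ℝ, (∀ n, 0 ≤ a n) →
          (∑ n ∈ Finset.Icc (-(K : ℤ)) K,
              ((n : ℝ) ^ 4 - C * Cinv ^ 2 * (n : ℝ) ^ 2) * (a n) ^ 2 ≤ C * Cinv ^ 4) →
          (∑ n ∈ Finset.Icc (-(K : ℤ)) K, (a n) ^ 2 ≤ 1) →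
          ∀ n : ℤ, 1 < |n| → |n| ≤ (K : ℤ) → a n ≤ C' * Cinv ^ 2 / (n : ℝ) ^ 2 := by
  intro C hC
  set D : ℝ := 2 * (C + C ^ 2 / 4) with hD
  have hDpos : 0 < D := by positivity
  refine ⟨Real.sqrt D + 2 * C, by positivity, ?_⟩
  intro K Cinv hCinv a ha hsum hnorm n hn hnK
  have hnmem : n ∈ Finset.Icc (-(K : ℤ)) K := by
    rw [Finset.mem_Icc]
    constructor <;> [linarith [neg_abs_le n]; linarith [le_abs_self n]]
  have hn2 : (1 : ℝ) < (n : ℝ) ^ 2 := by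
    have : (1 : ℤ) < n ^ 2 := by nlinarith [sq_abs n, hn]
    exact_mod_cast this
  have hn2pos : (0 : ℝ) < (n : ℝ) ^ 2 := by linarith
  set f : ℤ → ℝ := fun m => ((m : ℝ) ^ 4 - C * Cinv ^ 2 * (m : ℝ) ^ 2) with hf
  -- key: f n * a n ^ 2 ≤ C * Cinv ^ 4 + C ^ 2 * Cinv ^ 4 / 4
  have hsplit :
      f n * a n ^ 2 + ∑ m ∈ (Finset.Icc (-(K : ℤ)) K).erase n, f m * a m ^ 2
        = ∑ m ∈ Finset.Icc (-(K : ℤ)) K, f m * a m ^ 2 :=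
    Finset.add_sum_erase _ (fun m => f m * a m ^ 2) hnmem
  have htail : - (C ^ 2 * Cinv ^ 4 / 4)
      ≤ ∑ m ∈ (Finset.Icc (-(K : ℤ)) K).erase n, f m * a m ^ 2 := by
    have h1 : ∀ m ∈ (Finset.Icc (-(K : ℤ)) K).erase n,
        (- (C ^ 2 * Cinv ^ 4 / 4)) * a m ^ 2 ≤ f m * a m ^ 2 := by
      intro m _
      have hfm : - (C ^ 2 * Cinv ^ 4 / 4) ≤ f m := by
        simp only [hf]
        nlinarith [sq_nonneg ((m : ℝ) ^ 2 - C * Cinv ^ 2 / 2)]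
      exact mul_le_mul_of_nonneg_right hfm (sq_nonneg _)
    calc - (C ^ 2 * Cinv ^ 4 / 4)
        ≤ (- (C ^ 2 * Cinv ^ 4 / 4)) * ∑ m ∈ (Finset.Icc (-(K : ℤ)) K).erase n, a m ^ 2 := by
          have hle1 : ∑ m ∈ (Finset.Icc (-(K : ℤ)) K).erase n, a m ^ 2 ≤ 1 :=
            le_trans (Finset.sum_le_sum_of_subset_of_nonneg (Finset.erase_subset _ _)
              (fun m _ _ => sq_nonneg _)) hnorm
          nlinarith [sq_nonneg C, sq_nonneg Cinv, sq_nonneg (C * Cinv ^ 2)]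
      _ = ∑ m ∈ (Finset.Icc (-(K : ℤ)) K).erase n,
          (- (C ^ 2 * Cinv ^ 4 / 4)) * a m ^ 2 := by rw [Finset.mul_sum]
      _ ≤ _ := Finset.sum_le_sum h1
  have hDC : D * Cinv ^ 4 = 2 * C * Cinv ^ 4 + C ^ 2 * Cinv ^ 4 / 2 := by rw [hD]; ring
  have hkey : f n * a n ^ 2 ≤ C * Cinv ^ 4 + C ^ 2 * Cinv ^ 4 / 4 := by
    simp only [hf] at hsplit htail ⊢
    linarith [htail, hsplit, hsum]
  by_cases hcase : 2 * C * Cinv ^ 2 ≤ (n : ℝ) ^ 2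
  · -- large n: f n ≥ n^4 / 2
    have hfn : (n : ℝ) ^ 4 / 2 ≤ f n := by
      simp only [hf]
      nlinarith [sq_nonneg (a n), hn2pos]
    have han2 : a n ^ 2 ≤ D * Cinv ^ 4 / (n : ℝ) ^ 4 := by
      have hn4 : (0 : ℝ) < (n : ℝ) ^ 4 := by nlinarith [hn2pos]
      rw [le_div_iff₀ hn4]
      nlinarith [hkey, mul_le_mul_of_nonneg_right hfn (sq_nonneg (a n)), sq_nonneg (a n), hDC]
    have key : a n ≤ Real.sqrt D * Cinv ^ 2 / (n : ℝ) ^ 2 := by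
      have : a n = Real.sqrt (a n ^ 2) := (Real.sqrt_sq (ha n)).symm
      rw [this]
      have heq : D * Cinv ^ 4 / (n : ℝ) ^ 4 = D * (Cinv ^ 2 / (n : ℝ) ^ 2) ^ 2 := by
        rw [div_pow]; ring
      calc Real.sqrt (a n ^ 2) ≤ Real.sqrt (D * (Cinv ^ 2 / (n : ℝ) ^ 2) ^ 2) := by
            rw [← heq]; exact Real.sqrt_le_sqrt han2
        _ = Real.sqrt D * (Cinv ^ 2 / (n : ℝ) ^ 2) := by
            rw [Real.sqrt_mul hDpos.le, Real.sqrt_sq (by positivity)]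
        _ = Real.sqrt D * Cinv ^ 2 / (n : ℝ) ^ 2 := by ring
    have h2C : 0 ≤ 2 * C * Cinv ^ 2 / (n : ℝ) ^ 2 := by positivity
    have hden : (Real.sqrt D + 2 * C) * Cinv ^ 2 / (n : ℝ) ^ 2
        = Real.sqrt D * Cinv ^ 2 / (n : ℝ) ^ 2 + 2 * C * Cinv ^ 2 / (n : ℝ) ^ 2 := by ring
    linarith [key]
  · -- small n: a n ≤ 1 and 1 ≤ 2C Cinv² / n²
    push_neg at hcase
    have han1 : a n ^ 2 ≤ 1 := by
      have h := Finset.single_le_sum (f := fun m : ℤ => a m ^ 2)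
        (fun m _ => sq_nonneg _) hnmem
      linarith
    have han : a n ≤ 1 := by nlinarith [ha n]
    have h1 : (1 : ℝ) ≤ 2 * C * Cinv ^ 2 / (n : ℝ) ^ 2 := by
      rw [le_div_iff₀ hn2pos]; linarith
    have hs : 0 ≤ Real.sqrt D * Cinv ^ 2 / (n : ℝ) ^ 2 := by positivity
    have hden : (Real.sqrt D + 2 * C) * Cinv ^ 2 / (n : ℝ) ^ 2
        = Real.sqrt D * Cinv ^ 2 / (n : ℝ) ^ 2 + 2 * C * Cinv ^ 2 / (n : ℝ) ^ 2 := by ring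
    linarith
end
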